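/- Let β > 0, 0 < c < 1, n ∈ ℕ, and t ∈ ℝ. Then for all x ∈ ℝ, M_n(x; β, c·e^{−t}) = Σ_{k=0}^{n} ((−n)_k (β+x)_k / (k! (β)_k)) · M_{n−k}(x; β+k, c) · e^{nt} (1−e^{−t})^k. (These are the orthogonal polynomials for the Toda-modified Meixner weight.) -/

import Mathlib

open Finset

/-- Pochhammer symbol `(a)_j = a(a+1)⋯(a+j-1)`. -/
noncomputable def poch (a : ℝ) (j : ℕ) : ℝ := ∏ i ∈ Finset.range j, (a + i)

/-- Meixner polynomial `M_n(x; β, c)`. -/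
noncomputable def meixnerM (n : ℕ) (x β c : ℝ) : ℝ :=
  ∑ k ∈ Finset.range (n + 1),
    poch (-(n : ℝ)) k * poch (-x) k / (poch β k * (k.factorial : ℝ)) * ((c - 1) / c) ^ k

lemma poch_zero (a : ℝ) : poch a 0 = 1 := by simp [poch]

lemma poch_succ (a : ℝ) (j : ℕ) : poch a (j+1) = poch a j * (a + j) := by
  simp [poch, Finset.prod_range_succ]

lemma poch_succ' (a : ℝ) (j : ℕ) : poch a (j+1) = a * poch (a+1) j := by
  simp only [poch, Finset.prod_range_succ']
  rw [mul_comm]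
  congr 1
  · simp
  · apply Finset.prod_congr rfl; intro i _; push_cast; ring

lemma poch_add (a : ℝ) (p q : ℕ) : poch a (p+q) = poch a p * poch (a+p) q := by
  simp only [poch, Finset.prod_range_add]
  congr 1
  apply Finset.prod_congr rfl; intro i _; push_cast; ring

lemma poch_pos {a : ℝ} (ha : 0 < a) (j : ℕ) : 0 < poch a j := by
  apply Finset.prod_pos
  intro i _
  positivity

lemma poch_ne_zero {a : ℝ} (ha : 0 < a) (j : ℕ) : poch a j ≠ 0 := (poch_pos ha j).ne'

lemma poch_neg_nat (N k : ℕ) (h : k ≤ N) :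
    poch (-(N:ℝ)) k = (-1)^k * (N.descFactorial k : ℝ) := by
  induction k with
  | zero => simp [poch_zero]
  | succ k ih =>
    rw [poch_succ, ih (Nat.le_of_succ_le h), Nat.descFactorial_succ]
    have hk : k < N := h
    push_cast [Nat.cast_sub hk.le]
    ring

lemma vand (p : ℕ) : ∀ a d : ℝ,
    poch (a - d) p = ∑ k ∈ range (p+1), (p.choose k : ℝ) * (-1)^k * poch d k * poch (a+k) (p-k) := by
  induction p with
  | zero => intro a d; simp [poch_zero]
  | succ p ih =>
    intro a d
    have key : ∀ k ∈ range (p+1+1), (((p+1).choose k : ℕ) : ℝ) * (-1)^k * poch d k * poch (a+k) (p+1-k)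
        = ((p.choose k : ℝ) * (-1)^k * poch d k * poch (a+k) (p+1-k))
          + ((if k = 0 then (0:ℝ) else (p.choose (k-1) : ℝ)) * (-1)^k * poch d k * poch (a+k) (p+1-k)) := by
      intro k _
      rcases k with _ | k
      · simp
      · rw [Nat.choose_succ_succ p k]
        push_cast
        norm_num
        ring
    rw [Finset.sum_congr rfl key, Finset.sum_add_distrib]
    have h1 : ∑ k ∈ range (p+1+1), (p.choose k : ℝ) * (-1)^k * poch d k * poch (a+k) (p+1-k)
        = ∑ k ∈ range (p+1), (p.choose k : ℝ) * (-1)^k * poch d k * ((a+k) * poch (a+k+1) (p-k)) := by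
      rw [Finset.sum_range_succ]
      simp only [Nat.choose_succ_self, Nat.cast_zero, zero_mul, mul_zero, zero_mul, add_zero]
      apply Finset.sum_congr rfl
      intro k hk
      rw [Finset.mem_range] at hk
      have : p + 1 - k = (p - k) + 1 := by omega
      rw [this, poch_succ']
    have h2 : ∑ k ∈ range (p+1+1), (if k = 0 then (0:ℝ) else (p.choose (k-1) : ℝ)) * (-1)^k * poch d k * poch (a+k) (p+1-k)
        = ∑ k ∈ range (p+1), (p.choose k : ℝ) * (-1)^(k+1) * poch d (k+1) * poch (a+k+1) (p-k) := by
      rw [Finset.sum_range_succ']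
      norm_num
      apply Finset.sum_congr rfl
      intro k hk
      have : p + 1 - (k+1) = p - k := by omega
      rw [this]
      push_cast
      ring_nf
    rw [h1, h2]
    have h3 : ∀ k ∈ range (p+1),
        (p.choose k : ℝ) * (-1)^k * poch d k * ((a+k) * poch (a+k+1) (p-k))
          + (p.choose k : ℝ) * (-1)^(k+1) * poch d (k+1) * poch (a+(k:ℝ)+1) (p-k)
        = (a - d) * ((p.choose k : ℝ) * (-1)^k * poch d k * poch ((a+1)+k) (p-k)) := by
      intro k _
      rw [poch_succ d k]
      have : a + (k:ℝ) + 1 = (a+1) + k := by ring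
      rw [this]
      ring
    rw [← Finset.sum_add_distrib]
    have h4 : ∑ k ∈ range (p+1), ((p.choose k : ℝ) * (-1)^k * poch d k * ((a+k) * poch (a+k+1) (p-k))
          + (p.choose k : ℝ) * (-1)^(k+1) * poch d (k+1) * poch (a+((k:ℕ):ℝ)+1) (p-k))
        = (a-d) * ∑ k ∈ range (p+1), (p.choose k : ℝ) * (-1)^k * poch d k * poch ((a+1)+k) (p-k) := by
      rw [Finset.mul_sum]
      apply Finset.sum_congr rfl
      intro k hk
      exact h3 k hk
    push_cast
    rw [h4, ← ih (a+1) d]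
    have : a + 1 - d = (a - d) + 1 := by ring
    rw [this, ← poch_succ']

lemma descFactorial_mul (N k j : ℕ) :
    N.descFactorial k * (N-k).descFactorial j = N.descFactorial (k+j) := by
  induction j with
  | zero => simp
  | succ j ih =>
    rw [Nat.descFactorial_succ, ← Nat.add_assoc, Nat.descFactorial_succ, ← ih]
    have : N - k - j = N - (k + j) := by omega
    rw [this]
    ring

lemma sumform (C B : ℝ) (hC : 0 < C) (p : ℕ) :
    ∑ k ∈ range (p+1), (-1)^k * poch (C-B) k / (poch C k * (k.factorial:ℝ) * ((p-k).factorial:ℝ))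
      = poch B p / (poch C p * (p.factorial:ℝ)) := by
  have hB : poch B p = poch (C - (C - B)) p := by norm_num
  rw [hB, vand p C (C-B)]
  rw [Finset.sum_div]
  apply Finset.sum_congr rfl
  intro k hk
  rw [Finset.mem_range] at hk
  have hkp : k ≤ p := by omega
  have hCp : poch C p = poch C k * poch (C + k) (p - k) := by
    rw [← poch_add]
    congr 1
    omega
  have hfac : (p.factorial : ℝ) = (p.choose k : ℝ) * (k.factorial : ℝ) * ((p-k).factorial : ℝ) := by
    rw [← Nat.cast_mul, ← Nat.cast_mul, Nat.choose_mul_factorial_mul_factorial hkp]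
  rw [hCp, hfac]
  have h1 : poch C k ≠ 0 := poch_ne_zero hC k
  have h2 : poch (C + k) (p-k) ≠ 0 := by
    apply poch_ne_zero
    positivity
  have h3 : (k.factorial : ℝ) ≠ 0 := by positivity
  have h4 : ((p-k).factorial : ℝ) ≠ 0 := by positivity
  have h5 : (p.choose k : ℝ) ≠ 0 := by
    have := Nat.choose_pos hkp
    positivity
  field_simp

lemma coefid (N p : ℕ) (hp : p ≤ N) (B C : ℝ) (hC : 0 < C) :
    ∑ k ∈ range (p+1), poch (-(N:ℝ)) k * poch (C-B) k / (poch C k * (k.factorial:ℝ))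
        * ((-1)^p * (((N-k).choose (p-k) : ℕ) : ℝ))
      = poch (-(N:ℝ)) p * poch B p / (poch C p * (p.factorial:ℝ)) := by
  have key : ∀ k ∈ range (p+1),
      poch (-(N:ℝ)) k * poch (C-B) k / (poch C k * (k.factorial:ℝ))
        * ((-1)^p * (((N-k).choose (p-k) : ℕ) : ℝ))
      = ((-1)^p * (N.descFactorial p : ℝ)) *
          ((-1)^k * poch (C-B) k / (poch C k * (k.factorial:ℝ) * (((p-k).factorial:ℕ) : ℝ))) := by
    intro k hk
    rw [Finset.mem_range] at hk
    have hkp : k ≤ p := by omega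
    have hkN : k ≤ N := le_trans hkp hp
    rw [poch_neg_nat N k hkN]
    have hD : (N.descFactorial k : ℝ) * (((N-k).choose (p-k) : ℕ) : ℝ) * (((p-k).factorial:ℕ):ℝ)
        = (N.descFactorial p : ℝ) := by
      rw [← Nat.cast_mul, ← Nat.cast_mul]
      congr 1
      have : (N-k).descFactorial (p-k) = (p-k).factorial * (N-k).choose (p-k) :=
        Nat.descFactorial_eq_factorial_mul_choose _ _
      calc N.descFactorial k * (N - k).choose (p - k) * (p-k).factorial
          = N.descFactorial k * ((p-k).factorial * (N-k).choose (p-k)) := by ring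
        _ = N.descFactorial k * (N-k).descFactorial (p-k) := by rw [this]
        _ = N.descFactorial (k + (p-k)) := descFactorial_mul N k (p-k)
        _ = N.descFactorial p := by congr 1; omega
    have h4 : (((p-k).factorial:ℕ) : ℝ) ≠ 0 := by positivity
    have h1 : poch C k ≠ 0 := poch_ne_zero hC k
    have h3 : (k.factorial : ℝ) ≠ 0 := by positivity
    field_simp
    linear_combination (poch (C - B) k) * hD
  rw [Finset.sum_congr rfl key, ← Finset.mul_sum, sumform C B hC p, poch_neg_nat N p hp]
  ring

lemma tri (N : ℕ) (f : ℕ → ℕ → ℝ) :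
    ∑ p ∈ range (N+1), ∑ k ∈ range (p+1), f k (p-k)
      = ∑ k ∈ range (N+1), ∑ j ∈ range (N+1-k), f k j := by
  induction N with
  | zero => simp
  | succ N ih =>
    rw [Finset.sum_range_succ, ih]
    have hR : ∑ k ∈ range (N+1+1), ∑ j ∈ range (N+1+1-k), f k j
        = (∑ k ∈ range (N+1), ∑ j ∈ range (N+1-k), f k j)
          + ∑ k ∈ range (N+1+1), f k (N+1-k) := by
      rw [Finset.sum_range_succ]
      have : N+1+1-(N+1) = 1 := by omega
      rw [this]
      have hsplit : ∀ k ∈ range (N+1), ∑ j ∈ range (N+1+1-k), f k j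
          = (∑ j ∈ range (N+1-k), f k j) + f k (N+1-k) := by
        intro k hk
        rw [Finset.mem_range] at hk
        have : N+1+1-k = (N+1-k)+1 := by omega
        rw [this, Finset.sum_range_succ]
      have e1 : ∑ k ∈ range (N+1+1), f k (N+1-k)
          = (∑ k ∈ range (N+1), f k (N+1-k)) + f (N+1) 0 := by
        rw [Finset.sum_range_succ]
        congr 2
        omega
      rw [Finset.sum_congr rfl hsplit, Finset.sum_add_distrib, Finset.sum_range_one, e1]
      ring
    rw [hR]

lemma triswap (N : ℕ) (f : ℕ → ℕ → ℝ) :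
    ∑ k ∈ range (N+1), ∑ j ∈ range (N+1-k), f k j
      = ∑ j ∈ range (N+1), ∑ k ∈ range (N+1-j), f k j := by
  rw [← tri N f]
  have : ∀ p ∈ range (N+1), ∑ k ∈ range (p+1), f k (p-k)
      = ∑ k ∈ range (p+1), f (p-k) k := by
    intro p _
    rw [← Finset.sum_range_reflect]
    apply Finset.sum_congr rfl
    intro k hk
    rw [Finset.mem_range] at hk
    congr 1 <;> omega
  rw [Finset.sum_congr rfl this, tri N (fun k j => f j k)]

lemma pfaff (N : ℕ) (B C X : ℝ) (hC : 0 < C) :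
    ∑ i ∈ range (N+1), poch (-(N:ℝ)) i * poch B i / (poch C i * (i.factorial:ℝ)) * (1-X)^i
      = ∑ k ∈ range (N+1), poch (-(N:ℝ)) k * poch (C-B) k / (poch C k * (k.factorial:ℝ))
          * (X-1)^k * X^(N-k) := by
  have step1 : ∀ k ∈ range (N+1),
      poch (-(N:ℝ)) k * poch (C-B) k / (poch C k * (k.factorial:ℝ)) * (X-1)^k * X^(N-k)
      = ∑ j ∈ range (N+1-k),
          poch (-(N:ℝ)) k * poch (C-B) k / (poch C k * (k.factorial:ℝ))
            * (X-1)^(k+j) * (((N-k).choose j : ℕ) : ℝ) := by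
    intro k hk
    rw [Finset.mem_range] at hk
    have hX : X^(N-k) = ((X-1)+1)^(N-k) := by norm_num
    rw [hX, add_pow]
    rw [Finset.mul_sum]
    have : N+1-k = (N-k)+1 := by omega
    rw [this]
    apply Finset.sum_congr rfl
    intro j hj
    rw [pow_add]
    ring
  rw [Finset.sum_congr rfl step1]
  rw [← tri N (fun k j => poch (-(N:ℝ)) k * poch (C-B) k / (poch C k * (k.factorial:ℝ))
            * (X-1)^(k+j) * (((N-k).choose j : ℕ) : ℝ))]
  apply Finset.sum_congr rfl
  intro p hp
  rw [Finset.mem_range] at hp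
  have hpN : p ≤ N := by omega
  have inner : ∀ k ∈ range (p+1),
      poch (-(N:ℝ)) k * poch (C-B) k / (poch C k * (k.factorial:ℝ))
        * (X-1)^(k+(p-k)) * (((N-k).choose (p-k) : ℕ) : ℝ)
      = (1-X)^p * (poch (-(N:ℝ)) k * poch (C-B) k / (poch C k * (k.factorial:ℝ))
          * ((-1)^p * (((N-k).choose (p-k) : ℕ) : ℝ))) := by
    intro k hk
    rw [Finset.mem_range] at hk
    have : k + (p-k) = p := by omega
    rw [this]
    have : (X-1)^p = (-1)^p * (1-X)^p := by
      rw [← mul_pow]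
      congr 1
      ring
    rw [this]
    ring
  rw [Finset.sum_congr rfl inner, ← Finset.mul_sum, coefid N p hpN B C hC]
  ring

lemma main_expansion (β : ℝ) (hβ : 0 < β) (n : ℕ) (b X Y : ℝ) :
    ∑ j ∈ range (n+1), poch (-(n:ℝ)) j * poch b j / (poch β j * (j.factorial:ℝ)) * (1 - X*Y)^j
    = ∑ k ∈ range (n+1), poch (-(n:ℝ)) k * poch (β-b) k / ((k.factorial:ℝ) * poch β k)
        * (∑ m ∈ range (n-k+1), poch (-((n-k:ℕ):ℝ)) m * poch b m
            / (poch (β+(k:ℝ)) m * (m.factorial:ℝ)) * (1-Y)^m)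
        * (X-1)^k * X^(n-k) := by
  -- abbreviations as functions
  set G : ℕ → ℕ → ℝ := fun p k => poch (-(n:ℝ)) p * poch b p / (poch β p * (p.factorial:ℝ))
      * ((p.choose k : ℕ) : ℝ) * (X*(1-Y))^k * (1-X)^(p-k) with hG
  set H : ℕ → ℕ → ℝ := fun k m => poch (-(n:ℝ)) k * poch (β-b) k / ((k.factorial:ℝ) * poch β k)
      * (poch (-((n-k:ℕ):ℝ)) m * poch b m / (poch (β+(k:ℝ)) m * (m.factorial:ℝ)) * (1-Y)^m)
      * (X-1)^k * X^(n-k) with hH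
  have lhs1 : ∑ j ∈ range (n+1), poch (-(n:ℝ)) j * poch b j / (poch β j * (j.factorial:ℝ)) * (1 - X*Y)^j
      = ∑ p ∈ range (n+1), ∑ k ∈ range (p+1), G p k := by
    apply Finset.sum_congr rfl
    intro j _
    have e : (1:ℝ) - X*Y = (X*(1-Y)) + (1-X) := by ring
    rw [e, add_pow, Finset.mul_sum]
    apply Finset.sum_congr rfl
    intro k _
    simp only [hG]
    ring
  have lhs2 : ∑ p ∈ range (n+1), ∑ k ∈ range (p+1), G p k
      = ∑ m ∈ range (n+1), ∑ i ∈ range (n+1-m), G (m+i) m := by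
    rw [← tri n (fun k i => G (k+i) k)]
    apply Finset.sum_congr rfl
    intro p hp
    apply Finset.sum_congr rfl
    intro k hk
    rw [Finset.mem_range] at hk
    have : k + (p - k) = p := by omega
    rw [this]
  have rhs1 : ∑ k ∈ range (n+1), poch (-(n:ℝ)) k * poch (β-b) k / ((k.factorial:ℝ) * poch β k)
        * (∑ m ∈ range (n-k+1), poch (-((n-k:ℕ):ℝ)) m * poch b m
            / (poch (β+(k:ℝ)) m * (m.factorial:ℝ)) * (1-Y)^m)
        * (X-1)^k * X^(n-k)
      = ∑ k ∈ range (n+1), ∑ m ∈ range (n+1-k), H k m := by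
    apply Finset.sum_congr rfl
    intro k hk
    rw [Finset.mem_range] at hk
    have e : n - k + 1 = n + 1 - k := by omega
    rw [e, Finset.mul_sum, Finset.sum_mul, Finset.sum_mul]
  have rhs2 : ∑ k ∈ range (n+1), ∑ m ∈ range (n+1-k), H k m
      = ∑ m ∈ range (n+1), ∑ k ∈ range (n+1-m), H k m := triswap n H
  rw [lhs1, lhs2, rhs1, rhs2]
  apply Finset.sum_congr rfl
  intro m hm
  rw [Finset.mem_range] at hm
  have hm' : m ≤ n := by omega
  have hNm : n + 1 - m = (n-m) + 1 := by omega
  have hC : (0:ℝ) < β + m := by positivity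
  -- common factor
  have keyL : ∀ i ∈ range ((n-m)+1), G (m+i) m
      = (poch (-(n:ℝ)) m * poch b m / (poch β m * (m.factorial:ℝ)) * (X*(1-Y))^m)
        * (poch (-((n-m:ℕ):ℝ)) i * poch (b+m) i / (poch (β+m) i * (i.factorial:ℝ)) * (1-X)^i) := by
    intro i hi
    rw [Finset.mem_range] at hi
    simp only [hG]
    have e1 : poch (-(n:ℝ)) (m+i) = poch (-(n:ℝ)) m * poch (-((n-m:ℕ):ℝ)) i := by
      rw [poch_add]
      congr 2
      push_cast [Nat.cast_sub hm']
      ring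
    have e2 : poch b (m+i) = poch b m * poch (b+m) i := poch_add b m i
    have e3 : poch β (m+i) = poch β m * poch (β+m) i := poch_add β m i
    have e4 : ((m+i).factorial : ℝ) = ((m+i).choose m : ℝ) * (m.factorial:ℝ) * (i.factorial:ℝ) := by
      rw [← Nat.cast_mul, ← Nat.cast_mul]
      congr 1
      rw [← Nat.choose_mul_factorial_mul_factorial (Nat.le_add_right m i), Nat.add_sub_cancel_left]
    have e5 : m + i - m = i := by omega
    have hch : (0:ℝ) < ((m+i).choose m : ℝ) := by
      have := Nat.choose_pos (Nat.le_add_right m i)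
      positivity
    rw [e1, e2, e3, e4, e5]
    have h1 : poch β m ≠ 0 := poch_ne_zero hβ m
    have h2 : poch (β+m) i ≠ 0 := poch_ne_zero hC i
    have h3 : (m.factorial:ℝ) ≠ 0 := by positivity
    have h4 : (i.factorial:ℝ) ≠ 0 := by positivity
    field_simp
  have keyR : ∀ k ∈ range ((n-m)+1), H k m
      = (poch (-(n:ℝ)) m * poch b m / (poch β m * (m.factorial:ℝ)) * (X*(1-Y))^m)
        * (poch (-((n-m:ℕ):ℝ)) k * poch ((β+m) - (b+m)) k / (poch (β+m) k * (k.factorial:ℝ))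
            * (X-1)^k * X^((n-m)-k)) := by
    intro k hk
    rw [Finset.mem_range] at hk
    have hkm : k + m ≤ n := by omega
    have hkn : k ≤ n := by omega
    simp only [hH]
    have c1 : (-(((n-k) : ℕ):ℝ)) = (k:ℝ) - n := by
      push_cast [Nat.cast_sub hkn]
      ring
    have c2 : (-(((n-m) : ℕ):ℝ)) = (m:ℝ) - n := by
      push_cast [Nat.cast_sub hm']
      ring
    rw [c1, c2]
    have a1 : poch (-(n:ℝ)) k * poch ((k:ℝ) - n) m = poch (-(n:ℝ)) (k+m) := by
      rw [poch_add]
      congr 2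
      ring
    have a2 : poch (-(n:ℝ)) m * poch ((m:ℝ) - n) k = poch (-(n:ℝ)) (m+k) := by
      rw [poch_add]
      congr 2
      ring
    have e1 : poch (-(n:ℝ)) k * poch ((k:ℝ) - n) m = poch (-(n:ℝ)) m * poch ((m:ℝ) - n) k := by
      rw [a1, a2]
      congr 1
      omega
    have e2 : poch β k * poch (β+(k:ℝ)) m = poch β m * poch (β+(m:ℝ)) k := by
      rw [← poch_add, ← poch_add]
      congr 1
      omega
    have e3 : X^(n-k) = X^m * X^((n-m)-k) := by
      rw [← pow_add]
      congr 1
      omega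
    have e4 : (β+(m:ℝ)) - (b+m) = β - b := by ring
    rw [e4, e3]
    have e12 : (poch (-(n:ℝ)) k * poch ((k:ℝ)-n) m) * (poch β m * poch (β+(m:ℝ)) k)
        = (poch (-(n:ℝ)) m * poch ((m:ℝ)-n) k) * (poch β k * poch (β+(k:ℝ)) m) := by
      rw [e1, e2]
    have h1 : poch β m ≠ 0 := poch_ne_zero hβ m
    have h2 : poch (β+(m:ℝ)) k ≠ 0 := poch_ne_zero hC k
    have h3 : poch β k ≠ 0 := poch_ne_zero hβ k
    have h4 : poch (β+(k:ℝ)) m ≠ 0 := by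
      apply poch_ne_zero
      positivity
    have h5 : (m.factorial:ℝ) ≠ 0 := by positivity
    have h6 : (k.factorial:ℝ) ≠ 0 := by positivity
    rw [mul_pow]
    field_simp
    linear_combination (poch (β-b) k * poch b m * (1-Y)^m * (X-1)^k * X^m * X^((n-m)-k)
      ) * e12
  rw [hNm, Finset.sum_congr rfl keyL, Finset.sum_congr rfl keyR, ← Finset.mul_sum, ← Finset.mul_sum]
  congr 1
  exact pfaff (n-m) (b+m) (β+m) X hC

theorem meixner_toda_expansion_first (β c : ℝ) (hβ : 0 < β) (hc0 : 0 < c) (hc1 : c < 1)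
    (n : ℕ) (t : ℝ) (x : ℝ) :
    meixnerM n x β (c * Real.exp (-t)) =
      ∑ k ∈ Finset.range (n + 1),
        poch (-(n : ℝ)) k * poch (β + x) k / ((k.factorial : ℝ) * poch β k) *
          meixnerM (n - k) x (β + k) c * Real.exp (n * t) * (1 - Real.exp (-t)) ^ k := by
  have hexp : Real.exp t ≠ 0 := (Real.exp_pos t).ne'
  have hexp' : Real.exp (-t) ≠ 0 := (Real.exp_pos (-t)).ne'
  have hcne : c ≠ 0 := hc0.ne'
  have key := main_expansion β hβ n (-x) (Real.exp t) c⁻¹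
  calc meixnerM n x β (c * Real.exp (-t))
      = ∑ j ∈ range (n+1), poch (-(n:ℝ)) j * poch (-x) j / (poch β j * (j.factorial:ℝ))
          * (1 - Real.exp t * c⁻¹)^j := by
        unfold meixnerM
        apply Finset.sum_congr rfl
        intro j _
        congr 2
        rw [Real.exp_neg]
        field_simp
    _ = ∑ k ∈ range (n+1), poch (-(n:ℝ)) k * poch (β-(-x)) k / ((k.factorial:ℝ) * poch β k)
          * (∑ m ∈ range (n-k+1), poch (-((n-k:ℕ):ℝ)) m * poch (-x) m
              / (poch (β+(k:ℝ)) m * (m.factorial:ℝ)) * (1-c⁻¹)^m)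
          * (Real.exp t - 1)^k * (Real.exp t)^(n-k) := key
    _ = ∑ k ∈ Finset.range (n + 1),
        poch (-(n : ℝ)) k * poch (β + x) k / ((k.factorial : ℝ) * poch β k) *
          meixnerM (n - k) x (β + k) c * Real.exp (n * t) * (1 - Real.exp (-t)) ^ k := by
        apply Finset.sum_congr rfl
        intro k hk
        rw [Finset.mem_range] at hk
        have hkn : k ≤ n := by omega
        have e1 : β - (-x) = β + x := by ring
        have e2 : ∑ m ∈ range (n-k+1), poch (-((n-k:ℕ):ℝ)) m * poch (-x) m
              / (poch (β+(k:ℝ)) m * (m.factorial:ℝ)) * (1-c⁻¹)^m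
            = meixnerM (n - k) x (β + k) c := by
          unfold meixnerM
          apply Finset.sum_congr rfl
          intro m _
          congr 2
          field_simp
        have e3 : (Real.exp t - 1)^k * (Real.exp t)^(n-k)
            = Real.exp ((n:ℝ) * t) * (1 - Real.exp (-t)) ^ k := by
          have b1 : (1 : ℝ) - Real.exp (-t) = Real.exp (-t) * (Real.exp t - 1) := by
            rw [Real.exp_neg]
            field_simp
          rw [b1, mul_pow, ← Real.exp_nat_mul, ← Real.exp_nat_mul]
          rw [show Real.exp ((n:ℝ)*t) * (Real.exp ((k:ℝ) * -t) * (Real.exp t - 1)^k)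
              = Real.exp ((n:ℝ)*t + (k:ℝ)*(-t)) * (Real.exp t - 1)^k from by
            rw [Real.exp_add]; ring]
          have b2 : ((n-k:ℕ):ℝ) * t = (n:ℝ)*t + (k:ℝ)*(-t) := by
            push_cast [Nat.cast_sub hkn]
            ring
          rw [b2]
          ring
        rw [e1, e2]
        rw [mul_assoc, mul_assoc, e3]
        ring
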